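/- Let V be a finite-dimensional real inner product space, (gₙ) a sequence in GL(V), and T ∈ End(V) with gₙ/‖gₙ‖ → T. Suppose gₙ = kₙ aₙ ℓₙ where kₙ, ℓₙ are orthogonal maps with kₙ → k, ℓₙ → ℓ, and aₙ are positive self-adjoint with ordered eigenvalues, such that aₙ/‖aₙ‖ converges to the orthogonal projection onto a fixed one-dimensional subspace L (i.e. σ₂(aₙ)/σ₁(aₙ) → 0 and the top eigenspace of aₙ is L for all n). Then T has rank one, with image k(L) and kernel ℓ⁻¹(L^⊥). -/

import Mathlib

open Filter

/-- limits of normalized operators with singular value decomposition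
gₙ = kₙ aₙ ℓₙ, where aₙ/‖aₙ‖ converges to the orthogonal projection onto a fixed
line L (top eigenspace of each aₙ), have rank one with image k(L) and kernel
ℓ⁻¹(L^⊥). -/
theorem stmt_15 {V : Type*} [NormedAddCommGroup V] [InnerProductSpace ℝ V]
    [FiniteDimensional ℝ V]
    (L : Submodule ℝ V) (hL : Module.finrank ℝ L = 1)
    (g a : ℕ → V →L[ℝ] V) (k l : ℕ → V ≃ₗᵢ[ℝ] V) (k0 l0 : V ≃ₗᵢ[ℝ] V)
    (hdecomp : ∀ n, g n =
      ((k n).toLinearIsometry.toContinuousLinearMap).comp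
        ((a n).comp ((l n).toLinearIsometry.toContinuousLinearMap)))
    (hsa : ∀ n, IsSelfAdjoint (a n))
    (hpos : ∀ n, ∀ v : V, 0 ≤ (inner ℝ ((a n) v) v : ℝ))
    (htop : ∀ n, ∀ v ∈ L, (a n) v = ‖a n‖ • v)
    (hk : Tendsto (fun n => (k n).toLinearIsometry.toContinuousLinearMap) atTop
      (nhds k0.toLinearIsometry.toContinuousLinearMap))
    (hl : Tendsto (fun n => (l n).toLinearIsometry.toContinuousLinearMap) atTop
      (nhds l0.toLinearIsometry.toContinuousLinearMap))
    (haproj : Tendsto (fun n => ‖a n‖⁻¹ • a n) atTop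
      (nhds (L.subtypeL.comp (Submodule.orthogonalProjection L))))
    (T : V →L[ℝ] V)
    (hT : Tendsto (fun n => ‖g n‖⁻¹ • g n) atTop (nhds T)) :
    LinearMap.rank (T : V →ₗ[ℝ] V) = 1 ∧
    LinearMap.range (T : V →ₗ[ℝ] V) = L.map k0.toLinearIsometry.toLinearMap ∧
    LinearMap.ker (T : V →ₗ[ℝ] V) = Lᗮ.comap l0.toLinearIsometry.toLinearMap := by
  set P : V →L[ℝ] V := L.subtypeL.comp (Submodule.orthogonalProjection L) with hP
  -- ‖g n‖ = ‖a n‖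
  have hnorm : ∀ n, ‖g n‖ = ‖a n‖ := by
    intro n
    rw [hdecomp n, (k n).toLinearIsometry.norm_toContinuousLinearMap_comp]
    exact ContinuousLinearMap.opNorm_comp_linearIsometryEquiv (a n) (l n)
  -- the normalized g equals k ∘ normalized a ∘ l
  have hgeq : ∀ n, ‖g n‖⁻¹ • g n =
      (k n).toLinearIsometry.toContinuousLinearMap *
        ((‖a n‖⁻¹ • a n) * (l n).toLinearIsometry.toContinuousLinearMap) := by
    intro n
    rw [hnorm n, hdecomp n]
    ext v
    simp [ContinuousLinearMap.mul_apply]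
  have h2 : Tendsto (fun n => (k n).toLinearIsometry.toContinuousLinearMap *
      ((‖a n‖⁻¹ • a n) * (l n).toLinearIsometry.toContinuousLinearMap)) atTop
      (nhds (k0.toLinearIsometry.toContinuousLinearMap *
        (P * l0.toLinearIsometry.toContinuousLinearMap))) :=
    hk.mul (haproj.mul hl)
  have hTeq : T = k0.toLinearIsometry.toContinuousLinearMap *
      (P * l0.toLinearIsometry.toContinuousLinearMap) := by
    refine tendsto_nhds_unique ?_ h2
    simpa only [hgeq] using hT
  have hTapply : ∀ v : V, T v = k0 (P (l0 v)) := by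
    intro v; rw [hTeq]; rfl
  -- kernel
  have hker : LinearMap.ker (T : V →ₗ[ℝ] V) = Lᗮ.comap l0.toLinearIsometry.toLinearMap := by
    ext v
    simp only [LinearMap.mem_ker, Submodule.mem_comap, ContinuousLinearMap.coe_coe, hTapply]
    rw [show k0 (P (l0 v)) = 0 ↔ P (l0 v) = 0 by
      constructor
      · intro h; apply k0.injective; simpa using h
      · intro h; rw [h]; simp]
    have : P (l0 v) = 0 ↔ (Submodule.orthogonalProjection L (l0 v) : L) = 0 := by
      exact Submodule.coe_eq_zero
    rw [this, ← ContinuousLinearMap.coe_coe, ← LinearMap.mem_ker, Submodule.ker_orthogonalProjection]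
    rfl
  -- range
  have hrange : LinearMap.range (T : V →ₗ[ℝ] V) = L.map k0.toLinearIsometry.toLinearMap := by
    ext y
    simp only [LinearMap.mem_range, Submodule.mem_map, ContinuousLinearMap.coe_coe, hTapply]
    constructor
    · rintro ⟨x, rfl⟩
      exact ⟨P (l0 x), by simp [hP], rfl⟩
    · rintro ⟨z, hz, rfl⟩
      refine ⟨l0.symm z, ?_⟩
      have : P z = z := by
        exact (Submodule.starProjection_eq_self_iff (K := L)).2 hz
      simp [this]
  refine ⟨?_, hrange, hker⟩
  -- rank
  have hfr : Module.finrank ℝ (LinearMap.range (T : V →ₗ[ℝ] V)) = 1 := by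
    rw [hrange]
    rw [show L.map k0.toLinearIsometry.toLinearMap = L.map (k0.toLinearEquiv : V →ₗ[ℝ] V) from rfl]
    rw [LinearEquiv.finrank_map_eq]
    exact hL
  rw [LinearMap.rank]
  exact Module.rank_eq_one_iff_finrank_eq_one.2 hfr
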